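/- Assume the mask P has i.i.d. Bernoulli(ρ) components with 0 < ρ ≤ 1, independent of (X,Y), and E[X_j²] = L² for every j. Then for every θ ∈ ℝ^d, R_imp(θ) = R(ρθ) + L²ρ(1−ρ)‖θ‖₂², where R(θ) = E[(Y − θᵀX)²] and R_imp(θ) = E[(Y − θᵀ(P⊙X))²]. -/

import Mathlib

open MeasureTheory ProbabilityTheory

private lemma l2_mul_int {Ω : Type*} {mΩ : MeasurableSpace Ω} {μ : Measure Ω}
    {f g : Ω → ℝ} (hf : MemLp f 2 μ) (hg : MemLp g 2 μ) :
    Integrable (fun ω => f ω * g ω) μ := by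
  have h := hg.smul (φ := f) (p := 2) (q := 2) (r := 1) hf
  exact memLp_one_iff_integrable.mp h

theorem stmt5 {Ω : Type*} {mΩ : MeasurableSpace Ω} (μ : Measure Ω) [IsProbabilityMeasure μ]
    {d : ℕ} (X : Ω → Fin d → ℝ) (Y : Ω → ℝ) (P : Ω → Fin d → ℝ)
    (hXm : Measurable X) (hYm : Measurable Y) (hPm : Measurable P)
    (hX2 : ∀ j, MemLp (fun ω => X ω j) 2 μ) (hY2 : MemLp Y 2 μ)
    (hP01 : ∀ ω j, P ω j = 0 ∨ P ω j = 1)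
    (ρ : ℝ) (hρpos : 0 < ρ) (hρle : ρ ≤ 1)
    (hρ : ∀ j, (μ {ω | P ω j = 1}).toReal = ρ)
    (hiid : iIndepFun (fun j ω => P ω j) μ)
    (hMCAR : IndepFun (fun ω => (X ω, Y ω)) P μ)
    (L : ℝ) (hL : ∀ j, ∫ ω, X ω j ^ 2 ∂μ = L ^ 2)
    (θ : Fin d → ℝ) :
    ∫ ω, (Y ω - ∑ j, θ j * (P ω j * X ω j)) ^ 2 ∂μ =
      (∫ ω, (Y ω - ∑ j, (ρ * θ j) * X ω j) ^ 2 ∂μ) +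
        L ^ 2 * ρ * (1 - ρ) * ∑ j, θ j ^ 2 := by
  -- basic measurability
  have hXjm : ∀ j, Measurable fun ω => X ω j := fun j => (measurable_pi_apply j).comp hXm
  have hPjm : ∀ j, Measurable fun ω => P ω j := fun j => (measurable_pi_apply j).comp hPm
  -- bounds on P
  have hPabs : ∀ ω j, |P ω j| ≤ 1 := by
    intro ω j; rcases hP01 ω j with h | h <;> rw [h] <;> norm_num
  have hPPabs : ∀ ω j k, |P ω j * P ω k| ≤ 1 := by
    intro ω j k
    rw [abs_mul]
    exact mul_le_one₀ (hPabs ω j) (abs_nonneg _) (hPabs ω k)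
  -- integrability
  have intYX : ∀ j, Integrable (fun ω => Y ω * X ω j) μ := fun j => l2_mul_int hY2 (hX2 j)
  have intXX : ∀ j k, Integrable (fun ω => X ω j * X ω k) μ :=
    fun j k => l2_mul_int (hX2 j) (hX2 k)
  have intY2 : Integrable (fun ω => Y ω ^ 2) μ := by
    simpa [sq] using l2_mul_int hY2 hY2
  have intP : ∀ j, Integrable (fun ω => P ω j) μ := by
    intro j
    refine Integrable.mono' (integrable_const 1) (hPjm j).aestronglyMeasurable ?_
    exact Filter.Eventually.of_forall fun ω => by simpa using hPabs ω j
  have intPYX : ∀ j, Integrable (fun ω => P ω j * (Y ω * X ω j)) μ := by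
    intro j
    exact (intYX j).bdd_mul (hPjm j).aestronglyMeasurable
      (c := 1) (Filter.Eventually.of_forall fun ω => by simpa using hPabs ω j)
  have intPP : ∀ j k, Integrable (fun ω => P ω j * P ω k) μ := by
    intro j k
    refine Integrable.mono' (integrable_const 1)
      ((hPjm j).mul (hPjm k)).aestronglyMeasurable ?_
    exact Filter.Eventually.of_forall fun ω => by
      rw [Real.norm_eq_abs]; exact hPPabs ω j k
  have intPPXX : ∀ j k, Integrable (fun ω => (P ω j * P ω k) * (X ω j * X ω k)) μ := by
    intro j k
    exact (intXX j k).bdd_mul ((hPjm j).mul (hPjm k)).aestronglyMeasurable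
      (c := 1) (Filter.Eventually.of_forall fun ω => by rw [Real.norm_eq_abs]; exact hPPabs ω j k)
  -- expectation of P j
  have EP : ∀ j, ∫ ω, P ω j ∂μ = ρ := by
    intro j
    have hset : MeasurableSet {ω | P ω j = 1} := (hPjm j) (measurableSet_singleton 1)
    have hind : (fun ω => P ω j) = Set.indicator {ω | P ω j = 1} (fun _ => (1 : ℝ)) := by
      funext ω
      rcases hP01 ω j with h | h
      · rw [h, Set.indicator_apply, if_neg]; simp [h]
      · rw [h, Set.indicator_apply, if_pos]; exact h
    rw [hind, integral_indicator_const _ hset]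
    simpa [measureReal_def] using hρ j
  -- expectation of P j * P k
  have EPP : ∀ j k, ∫ ω, P ω j * P ω k ∂μ = if j = k then ρ else ρ ^ 2 := by
    intro j k
    by_cases h : j = k
    · subst h
      rw [if_pos rfl]
      have : (fun ω => P ω j * P ω j) = fun ω => P ω j := by
        funext ω; rcases hP01 ω j with h' | h' <;> rw [h'] <;> ring
      rw [this, EP j]
    · rw [if_neg h]
      have hind := (hiid.indepFun h).integral_fun_mul_eq_mul_integral
        (hPjm j).aestronglyMeasurable (hPjm k).aestronglyMeasurable
      rw [hind, EP j, EP k, sq]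
  -- independence consequences
  have EPYX : ∀ j, ∫ ω, P ω j * (Y ω * X ω j) ∂μ = ρ * ∫ ω, Y ω * X ω j ∂μ := by
    intro j
    have hind : IndepFun (fun ω => P ω j) (fun ω => Y ω * X ω j) μ := by
      have := hMCAR.symm.comp (φ := fun q : Fin d → ℝ => q j)
        (ψ := fun p : (Fin d → ℝ) × ℝ => p.2 * p.1 j)
        (measurable_pi_apply j : Measurable fun q : Fin d → ℝ => q j)
        (measurable_snd.mul (measurable_fst.eval) : Measurable fun p : (Fin d → ℝ) × ℝ => p.2 * p.1 j)
      exact this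
    rw [hind.integral_fun_mul_eq_mul_integral (hPjm j).aestronglyMeasurable
      ((hYm.mul (hXjm j)).aestronglyMeasurable), EP j]
  have EPPXX : ∀ j k, ∫ ω, (P ω j * P ω k) * (X ω j * X ω k) ∂μ =
      (if j = k then ρ else ρ ^ 2) * ∫ ω, X ω j * X ω k ∂μ := by
    intro j k
    have hind : IndepFun (fun ω => P ω j * P ω k) (fun ω => X ω j * X ω k) μ := by
      have := hMCAR.symm.comp (φ := fun q : Fin d → ℝ => q j * q k)
        (ψ := fun p : (Fin d → ℝ) × ℝ => p.1 j * p.1 k)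
        ((measurable_pi_apply j).mul (measurable_pi_apply k) : Measurable fun q : Fin d → ℝ => q j * q k)
        (((measurable_pi_apply j).comp measurable_fst).mul
          ((measurable_pi_apply k).comp measurable_fst) : Measurable fun p : (Fin d → ℝ) × ℝ => p.1 j * p.1 k)
      exact this
    rw [hind.integral_fun_mul_eq_mul_integral ((hPjm j).mul (hPjm k)).aestronglyMeasurable
      ((hXjm j).mul (hXjm k)).aestronglyMeasurable, EPP j k]
  -- diagonal second moments
  have hCjj : ∀ j, ∫ ω, X ω j * X ω j ∂μ = L ^ 2 := by
    intro j
    rw [← hL j]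
    exact integral_congr_ae (Filter.Eventually.of_forall fun ω => (sq (X ω j)).symm)
  -- pointwise expansion for the LHS
  have expand1 : ∀ ω, (Y ω - ∑ j, θ j * (P ω j * X ω j)) ^ 2 =
      Y ω ^ 2 - 2 * (∑ j, θ j * (P ω j * (Y ω * X ω j)))
        + ∑ j, ∑ k, (θ j * θ k) * ((P ω j * P ω k) * (X ω j * X ω k)) := by
    intro ω
    have h1 : Y ω * (∑ j, θ j * (P ω j * X ω j))
        = ∑ j, θ j * (P ω j * (Y ω * X ω j)) := by
      rw [Finset.mul_sum]
      exact Finset.sum_congr rfl fun j _ => by ring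
    have h2 : (∑ j, θ j * (P ω j * X ω j)) ^ 2
        = ∑ j, ∑ k, (θ j * θ k) * ((P ω j * P ω k) * (X ω j * X ω k)) := by
      rw [sq, Finset.sum_mul_sum]
      exact Finset.sum_congr rfl fun j _ => Finset.sum_congr rfl fun k _ => by ring
    rw [sub_sq, mul_assoc 2, h1, h2]
  -- pointwise expansion for the RHS
  have expand2 : ∀ ω, (Y ω - ∑ j, (ρ * θ j) * X ω j) ^ 2 =
      Y ω ^ 2 - 2 * (∑ j, (ρ * θ j) * (Y ω * X ω j))
        + ∑ j, ∑ k, ((ρ * θ j) * (ρ * θ k)) * (X ω j * X ω k) := by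
    intro ω
    have h1 : Y ω * (∑ j, (ρ * θ j) * X ω j)
        = ∑ j, (ρ * θ j) * (Y ω * X ω j) := by
      rw [Finset.mul_sum]
      exact Finset.sum_congr rfl fun j _ => by ring
    have h2 : (∑ j, (ρ * θ j) * X ω j) ^ 2
        = ∑ j, ∑ k, ((ρ * θ j) * (ρ * θ k)) * (X ω j * X ω k) := by
      rw [sq, Finset.sum_mul_sum]
      exact Finset.sum_congr rfl fun j _ => Finset.sum_congr rfl fun k _ => by ring
    rw [sub_sq, mul_assoc 2, h1, h2]
  -- integrate LHS
  have intsum1 : Integrable (fun ω => ∑ j, θ j * (P ω j * (Y ω * X ω j))) μ :=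
    integrable_finset_sum _ fun j _ => (intPYX j).const_mul (θ j)
  have intsum2 : Integrable
      (fun ω => ∑ j, ∑ k, (θ j * θ k) * ((P ω j * P ω k) * (X ω j * X ω k))) μ :=
    integrable_finset_sum _ fun j _ =>
      integrable_finset_sum _ fun k _ => (intPPXX j k).const_mul (θ j * θ k)
  have LHS_eq : ∫ ω, (Y ω - ∑ j, θ j * (P ω j * X ω j)) ^ 2 ∂μ =
      (∫ ω, Y ω ^ 2 ∂μ) - 2 * (∑ j, θ j * (ρ * ∫ ω, Y ω * X ω j ∂μ))
        + ∑ j, ∑ k, (θ j * θ k) *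
            ((if j = k then ρ else ρ ^ 2) * ∫ ω, X ω j * X ω k ∂μ) := by
    simp_rw [expand1]
    have I1 : Integrable (fun ω => 2 * ∑ j, θ j * (P ω j * (Y ω * X ω j))) μ :=
      intsum1.const_mul 2
    have I2 : Integrable
        (fun ω => Y ω ^ 2 - 2 * ∑ j, θ j * (P ω j * (Y ω * X ω j))) μ := intY2.sub I1
    rw [integral_add I2 intsum2, integral_sub intY2 I1, integral_const_mul,
      integral_finset_sum _ (fun j _ => (intPYX j).const_mul (θ j)),
      integral_finset_sum _ (fun j _ =>
        integrable_finset_sum _ fun k _ => (intPPXX j k).const_mul (θ j * θ k))]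
    congr 1
    · congr 2
      exact Finset.sum_congr rfl fun j _ => by
        rw [integral_const_mul, EPYX j]
    · refine Finset.sum_congr rfl fun j _ => ?_
      rw [integral_finset_sum _ (fun k _ => (intPPXX j k).const_mul (θ j * θ k))]
      exact Finset.sum_congr rfl fun k _ => by
        rw [integral_const_mul, EPPXX j k]
  -- integrate RHS
  have intsum1' : Integrable (fun ω => ∑ j, (ρ * θ j) * (Y ω * X ω j)) μ :=
    integrable_finset_sum _ fun j _ => (intYX j).const_mul (ρ * θ j)
  have intsum2' : Integrable
      (fun ω => ∑ j, ∑ k, ((ρ * θ j) * (ρ * θ k)) * (X ω j * X ω k)) μ :=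
    integrable_finset_sum _ fun j _ =>
      integrable_finset_sum _ fun k _ => (intXX j k).const_mul ((ρ * θ j) * (ρ * θ k))
  have RHS_eq : ∫ ω, (Y ω - ∑ j, (ρ * θ j) * X ω j) ^ 2 ∂μ =
      (∫ ω, Y ω ^ 2 ∂μ) - 2 * (∑ j, (ρ * θ j) * ∫ ω, Y ω * X ω j ∂μ)
        + ∑ j, ∑ k, ((ρ * θ j) * (ρ * θ k)) * ∫ ω, X ω j * X ω k ∂μ := by
    simp_rw [expand2]
    have I1 : Integrable (fun ω => 2 * ∑ j, (ρ * θ j) * (Y ω * X ω j)) μ :=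
      intsum1'.const_mul 2
    have I2 : Integrable
        (fun ω => Y ω ^ 2 - 2 * ∑ j, (ρ * θ j) * (Y ω * X ω j)) μ := intY2.sub I1
    rw [integral_add I2 intsum2', integral_sub intY2 I1, integral_const_mul,
      integral_finset_sum _ (fun j _ => (intYX j).const_mul (ρ * θ j)),
      integral_finset_sum _ (fun j _ =>
        integrable_finset_sum _ fun k _ => (intXX j k).const_mul ((ρ * θ j) * (ρ * θ k)))]
    congr 1
    · congr 2
      exact Finset.sum_congr rfl fun j _ => integral_const_mul _ _
    · refine Finset.sum_congr rfl fun j _ => ?_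
      rw [integral_finset_sum _ (fun k _ => (intXX j k).const_mul ((ρ * θ j) * (ρ * θ k)))]
      exact Finset.sum_congr rfl fun k _ => integral_const_mul _ _
  rw [LHS_eq, RHS_eq]
  -- split the diagonal part of the double sum
  have hsplit : ∀ j k, (θ j * θ k) *
        ((if j = k then ρ else ρ ^ 2) * ∫ ω, X ω j * X ω k ∂μ)
      = ((ρ * θ j) * (ρ * θ k)) * ∫ ω, X ω j * X ω k ∂μ
        + (if k = j then (ρ - ρ ^ 2) * θ j ^ 2 * L ^ 2 else 0) := by
    intro j k
    by_cases h : j = k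
    · subst h
      rw [if_pos rfl, if_pos rfl, hCjj j]
      ring
    · rw [if_neg h, if_neg (Ne.symm h)]
      ring
  have hdsum : ∑ j, ∑ k, (θ j * θ k) *
        ((if j = k then ρ else ρ ^ 2) * ∫ ω, X ω j * X ω k ∂μ)
      = (∑ j, ∑ k, ((ρ * θ j) * (ρ * θ k)) * ∫ ω, X ω j * X ω k ∂μ)
        + ∑ j, (ρ - ρ ^ 2) * θ j ^ 2 * L ^ 2 := by
    simp only [hsplit, Finset.sum_add_distrib, Finset.sum_ite_eq', Finset.mem_univ, if_true]
  rw [hdsum]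
  have hθ : ∑ j, θ j * (ρ * ∫ ω, Y ω * X ω j ∂μ)
      = ∑ j, (ρ * θ j) * ∫ ω, Y ω * X ω j ∂μ :=
    Finset.sum_congr rfl fun j _ => by ring
  have hlast : ∑ j, (ρ - ρ ^ 2) * θ j ^ 2 * L ^ 2
      = L ^ 2 * ρ * (1 - ρ) * ∑ j, θ j ^ 2 := by
    rw [Finset.mul_sum]
    exact Finset.sum_congr rfl fun j _ => by ring
  rw [hθ, hlast]
  ring
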